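/- Let (W,S) be a Coxeter system, S = I ∪ J a partition such that no element of I is conjugate to an element of J, and φ a weight function with φ(s) = 0 for all s ∈ I. Then for every s ∈ I, (T_s^φ)² = 1 and T_s^φ is fixed by the bar involution, and more generally, for x, y ∈ W with ℓ_J(xy) = ℓ_J(x)+ℓ_J(y), one has T_x^φ T_y^φ = T_{xy}^φ. -/

import Mathlib

open Finsupp

noncomputable section

def expG {Γ : Type*} [AddCommGroup Γ] (γ : Γ) : AddMonoidAlgebra ℤ Γ :=
  AddMonoidAlgebra.single γ 1

structure IsHeckeAlgebra {B W Γ : Type*} [Group W] [AddCommGroup Γ]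
    {M : CoxeterMatrix B} (cs : CoxeterSystem M W) (φ : B → Γ)
    {A : Type*} [Ring A] [Algebra (AddMonoidAlgebra ℤ Γ) A]
    (T : Module.Basis W (AddMonoidAlgebra ℤ Γ) A) : Prop where
  one : T 1 = 1
  mul_of_length_add : ∀ w w' : W,
    cs.length (w * w') = cs.length w + cs.length w' → T w * T w' = T (w * w')
  quadratic : ∀ i : B,
    (T (cs.simple i) - algebraMap (AddMonoidAlgebra ℤ Γ) A (expG (φ i))) *
      (T (cs.simple i) + algebraMap (AddMonoidAlgebra ℤ Γ) A (expG (-φ i))) = 0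

open Classical in
/-- If `S = I ∪ J` with no conjugacy between the parts (`P` picks out `I`) and
`φ` vanishes on `I`, then `(T_s)² = 1` and `T̄_s = T_s` for `s ∈ I`, and
`T_x T_y = T_{xy}` whenever `ℓ_J(xy) = ℓ_J(x) + ℓ_J(y)`.  The bar involution is
pinned by `T̄_w · T_{w⁻¹} = 1`. -/
theorem stmt12 {B W Γ : Type*} [Group W] [AddCommGroup Γ] [LinearOrder Γ] [IsOrderedAddMonoid Γ]
    {M : CoxeterMatrix B} (cs : CoxeterSystem M W)
    (P : B → Prop)
    (hsep : ∀ i j : B, P i → ¬ P j → ¬ IsConj (cs.simple i) (cs.simple j))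
    (φ : B → Γ)
    (hφconj : ∀ i j : B, IsConj (cs.simple i) (cs.simple j) → φ i = φ j)
    (hφI : ∀ i : B, P i → φ i = 0)
    (ℓJ : W → ℕ)
    (hℓJ : ∀ (w : W) (l : List B), cs.wordProd l = w → cs.IsReduced l →
      ℓJ w = (l.filter (fun i => decide (¬ P i))).length)
    {A : Type*} [Ring A] [Algebra (AddMonoidAlgebra ℤ Γ) A]
    (T : Module.Basis W (AddMonoidAlgebra ℤ Γ) A) (hA : IsHeckeAlgebra cs φ T)
    (bar : A →+ A)
    (hbarmul : ∀ a b : A, bar (a * b) = bar a * bar b)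
    (hbarT : ∀ w : W, bar (T w) * T w⁻¹ = 1) :
    (∀ i : B, P i → T (cs.simple i) * T (cs.simple i) = 1 ∧
      bar (T (cs.simple i)) = T (cs.simple i)) ∧
    (∀ x y : W, ℓJ (x * y) = ℓJ x + ℓJ y → T x * T y = T (x * y)) := by
  -- T_s² = 1 for s ∈ I
  have hsq : ∀ i : B, P i → T (cs.simple i) * T (cs.simple i) = 1 := by
    intro i hi
    have hq := hA.quadratic i
    rw [hφI i hi] at hq
    have h1 : expG (0 : Γ) = (1 : AddMonoidAlgebra ℤ Γ) := rfl
    rw [neg_zero, h1, map_one] at hq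
    have e : (T (cs.simple i) - 1) * (T (cs.simple i) + 1)
        = T (cs.simple i) * T (cs.simple i) - 1 := by noncomm_ring
    rw [e] at hq
    have := sub_eq_zero.mp hq
    rw [this]
  -- bar fixes T_s for s ∈ I
  have hbar : ∀ i : B, P i → bar (T (cs.simple i)) = T (cs.simple i) := by
    intro i hi
    have h := hbarT (cs.simple i)
    rw [cs.inv_simple] at h
    calc bar (T (cs.simple i))
        = bar (T (cs.simple i)) * (T (cs.simple i) * T (cs.simple i)) := by
          rw [hsq i hi, mul_one]
      _ = (bar (T (cs.simple i)) * T (cs.simple i)) * T (cs.simple i) := by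
          rw [mul_assoc]
      _ = T (cs.simple i) := by rw [h, one_mul]
  -- Lemma A : T_s T_w = T_(s w) for s ∈ I, any w
  have hTA : ∀ i : B, P i → ∀ w : W,
      T (cs.simple i) * T w = T (cs.simple i * w) := by
    intro i hi w
    rcases cs.length_simple_mul w i with h | h
    · exact hA.mul_of_length_add _ _ (by rw [h, cs.length_simple, add_comm])
    · have h2 : T (cs.simple i) * T (cs.simple i * w) = T w := by
        have := hA.mul_of_length_add (cs.simple i) (cs.simple i * w)
          (by rw [cs.simple_mul_simple_cancel_left, cs.length_simple]; omega)
        rwa [cs.simple_mul_simple_cancel_left] at this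
      calc T (cs.simple i) * T w
          = T (cs.simple i) * (T (cs.simple i) * T (cs.simple i * w)) := by rw [h2]
        _ = (T (cs.simple i) * T (cs.simple i)) * T (cs.simple i * w) := by
          rw [mul_assoc]
        _ = T (cs.simple i * w) := by rw [hsq i hi, one_mul]
  -- ℓJ of a cons
  have hcons : ∀ (i : B) (w : W), cs.length (cs.simple i * w) = cs.length w + 1 →
      ℓJ (cs.simple i * w) = ℓJ w + (if P i then 0 else 1) := by
    intro i w hlen
    obtain ⟨l, hred, rfl⟩ := cs.exists_reduced_word' w
    have hred' : cs.IsReduced (i :: l) := by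
      show cs.length (cs.wordProd (i :: l)) = (i :: l).length
      rw [cs.wordProd_cons, hlen, hred, List.length_cons]
    have h1 := hℓJ (cs.simple i * cs.wordProd l) (i :: l) (cs.wordProd_cons i l) hred'
    have h2 := hℓJ (cs.wordProd l) l rfl hred
    rw [h1, h2, List.filter_cons]
    by_cases hi : P i
    · simp [hi]
    · simp [hi]
  have hconsI : ∀ (i : B) (w : W), P i → ℓJ (cs.simple i * w) = ℓJ w := by
    intro i w hi
    rcases cs.length_simple_mul w i with h | h
    · rw [hcons i w h, if_pos hi, add_zero]
    · have := hcons i (cs.simple i * w)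
        (by rw [cs.simple_mul_simple_cancel_left]; omega)
      rw [cs.simple_mul_simple_cancel_left, if_pos hi, add_zero] at this
      omega
  have hℓJ1 : ℓJ (1 : W) = 0 := by
    have := hℓJ (1 : W) [] (cs.wordProd_nil) (by simp [CoxeterSystem.IsReduced])
    simpa using this
  -- subadditivity
  have hsub : ∀ n : ℕ, ∀ u v : W, cs.length u = n → ℓJ (u * v) ≤ ℓJ u + ℓJ v := by
    intro n
    induction n with
    | zero =>
      intro u v hu
      rw [cs.length_eq_zero_iff.mp hu, one_mul, hℓJ1, zero_add]
    | succ n ih =>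
      intro u v hu
      obtain ⟨l, hred, rfl⟩ := cs.exists_reduced_word' u
      cases l with
      | nil => simp at hu
      | cons i l' =>
        rw [cs.wordProd_cons] at hu ⊢
        set u' := cs.wordProd l' with hu'
        have hredl' : cs.IsReduced l' := by
          have h1 : cs.length u' ≤ l'.length := cs.length_wordProd_le l'
          have h2 : cs.length (cs.simple i * u') ≤ cs.length (cs.simple i) + cs.length u' :=
            cs.length_mul_le _ _
          have h3 := hred
          rw [CoxeterSystem.IsReduced, cs.wordProd_cons, List.length_cons, hu] at h3
          have h4 : (i :: l').length = l'.length + 1 := rfl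
          rw [cs.length_simple] at h2
          show cs.length u' = l'.length
          omega
        have hlu' : cs.length u' = n := by
          have h3 := hred
          rw [CoxeterSystem.IsReduced, cs.wordProd_cons, List.length_cons, hu] at h3
          rw [hredl']; omega
        have hasc : cs.length (cs.simple i * u') = cs.length u' + 1 := by omega
        have hJu : ℓJ (cs.simple i * u') = ℓJ u' + (if P i then 0 else 1) := hcons i u' hasc
        have hstep : ℓJ (cs.simple i * (u' * v)) ≤ ℓJ (u' * v) + (if P i then 0 else 1) := by
          rcases cs.length_simple_mul (u' * v) i with h | h
          · rw [hcons i (u' * v) h]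
          · have := hcons i (cs.simple i * (u' * v))
              (by rw [cs.simple_mul_simple_cancel_left]; omega)
            rw [cs.simple_mul_simple_cancel_left] at this
            omega
        have := ih u' v hlu'
        rw [mul_assoc]
        omega
  refine ⟨fun i hi => ⟨hsq i hi, hbar i hi⟩, ?_⟩
  -- main statement, by strong induction on length of x
  have main : ∀ n : ℕ, ∀ x y : W, cs.length x = n →
      ℓJ (x * y) = ℓJ x + ℓJ y → T x * T y = T (x * y) := by
    intro n
    induction n with
    | zero =>
      intro x y hx _
      rw [cs.length_eq_zero_iff.mp hx, hA.one, one_mul, one_mul]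
    | succ n ih =>
      intro x y hx hadd
      obtain ⟨l, hred, rfl⟩ := cs.exists_reduced_word' x
      cases l with
      | nil => simp at hx
      | cons i l' =>
        rw [cs.wordProd_cons] at hx hadd ⊢
        set x' := cs.wordProd l' with hx'
        have hredl' : cs.IsReduced l' := by
          have h1 : cs.length x' ≤ l'.length := cs.length_wordProd_le l'
          have h2 : cs.length (cs.simple i * x') ≤ cs.length (cs.simple i) + cs.length x' :=
            cs.length_mul_le _ _
          have h3 := hred
          rw [CoxeterSystem.IsReduced, cs.wordProd_cons, List.length_cons, hx] at h3
          rw [cs.length_simple] at h2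
          show cs.length x' = l'.length
          omega
        have hlx' : cs.length x' = n := by
          have h3 := hred
          rw [CoxeterSystem.IsReduced, cs.wordProd_cons, List.length_cons, hx] at h3
          rw [hredl']; omega
        have hasc : cs.length (cs.simple i * x') = cs.length x' + 1 := by omega
        have hTsplit : T (cs.simple i) * T x' = T (cs.simple i * x') :=
          hA.mul_of_length_add _ _ (by rw [hasc, cs.length_simple, add_comm])
        by_cases hi : P i
        · -- case s ∈ I
          have hJx : ℓJ (cs.simple i * x') = ℓJ x' := hconsI i x' hi
          have hJxy : ℓJ (cs.simple i * (x' * y)) = ℓJ (x' * y) := hconsI i _ hi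
          have hadd' : ℓJ (x' * y) = ℓJ x' + ℓJ y := by
            rw [mul_assoc] at hadd; omega
          have hIH := ih x' y hlx' hadd'
          calc T (cs.simple i * x') * T y
              = T (cs.simple i) * (T x' * T y) := by rw [← hTsplit, mul_assoc]
            _ = T (cs.simple i) * T (x' * y) := by rw [hIH]
            _ = T (cs.simple i * (x' * y)) := hTA i hi _
            _ = T (cs.simple i * x' * y) := by rw [mul_assoc]
        · -- case s ∈ J : the ascent case must hold
          have hJx : ℓJ (cs.simple i * x') = ℓJ x' + 1 := by
            have := hcons i x' hasc; rw [if_neg hi] at this; omega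
          have hascxy : cs.length (cs.simple i * (x' * y)) = cs.length (x' * y) + 1 := by
            rcases cs.length_simple_mul (x' * y) i with h | h
            · exact h
            · exfalso
              have h1 := hcons i (cs.simple i * (x' * y))
                (by rw [cs.simple_mul_simple_cancel_left]; omega)
              rw [cs.simple_mul_simple_cancel_left, if_neg hi] at h1
              have h2 := hsub (cs.length x') x' y rfl
              rw [mul_assoc] at hadd
              omega
          have hJxy : ℓJ (cs.simple i * (x' * y)) = ℓJ (x' * y) + 1 := by
            have := hcons i (x' * y) hascxy; rw [if_neg hi] at this; omega
          have hadd' : ℓJ (x' * y) = ℓJ x' + ℓJ y := by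
            rw [mul_assoc] at hadd; omega
          have hIH := ih x' y hlx' hadd'
          calc T (cs.simple i * x') * T y
              = T (cs.simple i) * (T x' * T y) := by rw [← hTsplit, mul_assoc]
            _ = T (cs.simple i) * T (x' * y) := by rw [hIH]
            _ = T (cs.simple i * (x' * y)) := hA.mul_of_length_add _ _
                (by rw [hascxy, cs.length_simple, add_comm])
            _ = T (cs.simple i * x' * y) := by rw [mul_assoc]
  exact fun x y h => main (cs.length x) x y rfl h
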